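/- SC-Mechanism (single facility): let med(x) denote the ⌈n/2⌉-th smallest coordinate of x, and let f be a mechanism such that there is a function g : ℝ → A with g(t) ∈ argmin_{a∈A} |a − t| for every t, and f(x) = g(med(x)). Then (i) f is group strategyproof: for every x, every nonempty S ⊆ {1,…,n} and every deviation x_S', there exists i ∈ S with |f(x) − x_i| ≤ |f(x_S', x_{−S}) − x_i|; and (ii) f is 3-approximate for the sum cost: Σ_i |f(x) − x_i| ≤ 3 · min_{a∈A} Σ_i |a − x_i| for every x. -/

import Mathlib

open Finset

/-- If at least `k+1` values of `y` are `≤ c`, then the `k`-th sorted value is `≤ c`. -/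
private lemma sorted_le_of_card {n : ℕ} (y : Fin n → ℝ) (k : Fin n) (c : ℝ)
    (h : k.val + 1 ≤ (univ.filter (fun i => y i ≤ c)).card) :
    y (Tuple.sort y k) ≤ c := by
  by_contra hc
  push_neg at hc
  have hmono := Tuple.monotone_sort y
  have hsub : (Finset.Ici k).image (Tuple.sort y) ⊆ univ.filter (fun i => ¬ y i ≤ c) := by
    intro i hi
    simp only [mem_image, mem_Ici] at hi
    obtain ⟨j, hj, rfl⟩ := hi
    simp only [mem_filter, mem_univ, true_and, not_le]
    exact lt_of_lt_of_le hc (hmono hj)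
  have hcard : n - k.val ≤ (univ.filter (fun i => ¬ y i ≤ c)).card := by
    calc n - k.val = (Finset.Ici k).card := (Fin.card_Ici k).symm
      _ = ((Finset.Ici k).image (Tuple.sort y)).card :=
          (Finset.card_image_of_injective _ (Tuple.sort y).injective).symm
      _ ≤ _ := Finset.card_le_card hsub
  have hN := Finset.card_filter_add_card_filter_not (s := (univ : Finset (Fin n)))
    (p := fun i => y i ≤ c)
  rw [Finset.card_univ, Fintype.card_fin] at hN
  have hk := k.isLt
  omega

/-- If at least `n - k` values of `y` are `≥ c`, then the `k`-th sorted value is `≥ c`. -/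
private lemma sorted_ge_of_card {n : ℕ} (y : Fin n → ℝ) (k : Fin n) (c : ℝ)
    (h : n - k.val ≤ (univ.filter (fun i => c ≤ y i)).card) :
    c ≤ y (Tuple.sort y k) := by
  by_contra hc
  push_neg at hc
  have hmono := Tuple.monotone_sort y
  have hsub : (Finset.Iic k).image (Tuple.sort y) ⊆ univ.filter (fun i => ¬ c ≤ y i) := by
    intro i hi
    simp only [mem_image, mem_Iic] at hi
    obtain ⟨j, hj, rfl⟩ := hi
    simp only [mem_filter, mem_univ, true_and, not_le]
    exact lt_of_le_of_lt (hmono hj) hc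
  have hcard : k.val + 1 ≤ (univ.filter (fun i => ¬ c ≤ y i)).card := by
    calc k.val + 1 = (Finset.Iic k).card := (Fin.card_Iic k).symm
      _ = ((Finset.Iic k).image (Tuple.sort y)).card :=
          (Finset.card_image_of_injective _ (Tuple.sort y).injective).symm
      _ ≤ _ := Finset.card_le_card hsub
  have hN := Finset.card_filter_add_card_filter_not (s := (univ : Finset (Fin n)))
    (p := fun i => c ≤ y i)
  rw [Finset.card_univ, Fintype.card_fin] at hN
  have hk := k.isLt
  omega

/-- At least `k+1` values of `x` are `≤` the `k`-th sorted value. -/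
private lemma card_le_sorted {n : ℕ} (x : Fin n → ℝ) (k : Fin n) :
    k.val + 1 ≤ (univ.filter (fun i => x i ≤ x (Tuple.sort x k))).card := by
  have hmono := Tuple.monotone_sort x
  have hsub : (Finset.Iic k).image (Tuple.sort x)
      ⊆ univ.filter (fun i => x i ≤ x (Tuple.sort x k)) := by
    intro i hi
    simp only [mem_image, mem_Iic] at hi
    obtain ⟨j, hj, rfl⟩ := hi
    simp only [mem_filter, mem_univ, true_and]
    exact hmono hj
  calc k.val + 1 = (Finset.Iic k).card := (Fin.card_Iic k).symm
    _ = ((Finset.Iic k).image (Tuple.sort x)).card :=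
        (Finset.card_image_of_injective _ (Tuple.sort x).injective).symm
    _ ≤ _ := Finset.card_le_card hsub

/-- At least `n - k` values of `x` are `≥` the `k`-th sorted value. -/
private lemma card_ge_sorted {n : ℕ} (x : Fin n → ℝ) (k : Fin n) :
    n - k.val ≤ (univ.filter (fun i => x (Tuple.sort x k) ≤ x i)).card := by
  have hmono := Tuple.monotone_sort x
  have hsub : (Finset.Ici k).image (Tuple.sort x)
      ⊆ univ.filter (fun i => x (Tuple.sort x k) ≤ x i) := by
    intro i hi
    simp only [mem_image, mem_Ici] at hi
    obtain ⟨j, hj, rfl⟩ := hi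
    simp only [mem_filter, mem_univ, true_and]
    exact hmono hj
  calc n - k.val = (Finset.Ici k).card := (Fin.card_Ici k).symm
    _ = ((Finset.Ici k).image (Tuple.sort x)).card :=
        (Finset.card_image_of_injective _ (Tuple.sort x).injective).symm
    _ ≤ _ := Finset.card_le_card hsub

/-- The median minimizes the sum of distances. -/
private lemma med_min {n : ℕ} (hn : 0 < n) (x : Fin n → ℝ) (b : ℝ) :
    (∑ i, |x (Tuple.sort x ⟨(n - 1) / 2, by have _hx := x; omega⟩) - x i|) ≤ ∑ i, |b - x i| := by
  set k : Fin n := ⟨(n - 1) / 2, by omega⟩ with hk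
  set m := x (Tuple.sort x k) with hm
  have hk2 : 2 * k.val ≤ n - 1 := by
    simp only [hk]; omega
  have hk3 : n ≤ 2 * k.val + 2 := by
    simp only [hk]; omega
  have hsub : (∑ i, |b - x i|) - ∑ i, |m - x i| = ∑ i, (|b - x i| - |m - x i|) :=
    (Finset.sum_sub_distrib _ _).symm
  rcases le_total m b with hmb | hbm
  · -- m ≤ b : use the count of points ≤ m
    have hsplit : ∑ i, (|b - x i| - |m - x i|)
        = (∑ i ∈ univ.filter (fun i => x i ≤ m), (|b - x i| - |m - x i|))
          + ∑ i ∈ univ.filter (fun i => ¬ x i ≤ m), (|b - x i| - |m - x i|) :=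
      (Finset.sum_filter_add_sum_filter_not univ _ _).symm
    have lb1 : (#(univ.filter (fun i => x i ≤ m)) : ℝ) * (b - m)
        ≤ ∑ i ∈ univ.filter (fun i => x i ≤ m), (|b - x i| - |m - x i|) := by
      rw [← nsmul_eq_mul]
      refine Finset.card_nsmul_le_sum _ _ _ (fun i hi => ?_)
      have hi' : x i ≤ m := (Finset.mem_filter.1 hi).2
      rcases abs_cases (m - x i) with ⟨e1, e2⟩ | ⟨e1, e2⟩ <;>
        rcases abs_cases (b - x i) with ⟨e3, e4⟩ | ⟨e3, e4⟩ <;> linarith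
    have lb2 : (#(univ.filter (fun i => ¬ x i ≤ m)) : ℝ) * (m - b)
        ≤ ∑ i ∈ univ.filter (fun i => ¬ x i ≤ m), (|b - x i| - |m - x i|) := by
      rw [← nsmul_eq_mul]
      refine Finset.card_nsmul_le_sum _ _ _ (fun i hi => ?_)
      rcases abs_cases (m - x i) with ⟨e1, e2⟩ | ⟨e1, e2⟩ <;>
        rcases abs_cases (b - x i) with ⟨e3, e4⟩ | ⟨e3, e4⟩ <;> linarith
    have hc1 : k.val + 1 ≤ #(univ.filter (fun i => x i ≤ m)) := card_le_sorted x k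
    have hN : #(univ.filter (fun i => x i ≤ m)) + #(univ.filter (fun i => ¬ x i ≤ m)) = n := by
      have := Finset.card_filter_add_card_filter_not
        (s := (univ : Finset (Fin n))) (p := fun i => x i ≤ m)
      simpa using this
    have hcast : (#(univ.filter (fun i => ¬ x i ≤ m)) : ℝ)
        ≤ (#(univ.filter (fun i => x i ≤ m)) : ℝ) := by
      exact_mod_cast Nat.cast_le.mpr (show
        #(univ.filter (fun i => ¬ x i ≤ m)) ≤ #(univ.filter (fun i => x i ≤ m)) by omega)
    nlinarith [lb1, lb2]
  · -- b ≤ m : use the count of points ≥ m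
    have hsplit : ∑ i, (|b - x i| - |m - x i|)
        = (∑ i ∈ univ.filter (fun i => m ≤ x i), (|b - x i| - |m - x i|))
          + ∑ i ∈ univ.filter (fun i => ¬ m ≤ x i), (|b - x i| - |m - x i|) :=
      (Finset.sum_filter_add_sum_filter_not univ _ _).symm
    have lb1 : (#(univ.filter (fun i => m ≤ x i)) : ℝ) * (m - b)
        ≤ ∑ i ∈ univ.filter (fun i => m ≤ x i), (|b - x i| - |m - x i|) := by
      rw [← nsmul_eq_mul]
      refine Finset.card_nsmul_le_sum _ _ _ (fun i hi => ?_)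
      have hi' : m ≤ x i := (Finset.mem_filter.1 hi).2
      rcases abs_cases (m - x i) with ⟨e1, e2⟩ | ⟨e1, e2⟩ <;>
        rcases abs_cases (b - x i) with ⟨e3, e4⟩ | ⟨e3, e4⟩ <;> linarith
    have lb2 : (#(univ.filter (fun i => ¬ m ≤ x i)) : ℝ) * (b - m)
        ≤ ∑ i ∈ univ.filter (fun i => ¬ m ≤ x i), (|b - x i| - |m - x i|) := by
      rw [← nsmul_eq_mul]
      refine Finset.card_nsmul_le_sum _ _ _ (fun i hi => ?_)
      rcases abs_cases (m - x i) with ⟨e1, e2⟩ | ⟨e1, e2⟩ <;>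
        rcases abs_cases (b - x i) with ⟨e3, e4⟩ | ⟨e3, e4⟩ <;> linarith
    have hc1 : n - k.val ≤ #(univ.filter (fun i => m ≤ x i)) := card_ge_sorted x k
    have hN : #(univ.filter (fun i => m ≤ x i)) + #(univ.filter (fun i => ¬ m ≤ x i)) = n := by
      have := Finset.card_filter_add_card_filter_not
        (s := (univ : Finset (Fin n))) (p := fun i => m ≤ x i)
      simpa using this
    have hcast : (#(univ.filter (fun i => ¬ m ≤ x i)) : ℝ)
        ≤ (#(univ.filter (fun i => m ≤ x i)) : ℝ) := by
      exact_mod_cast Nat.cast_le.mpr (show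
        #(univ.filter (fun i => ¬ m ≤ x i)) ≤ #(univ.filter (fun i => m ≤ x i)) by omega)
    nlinarith [lb1, lb2]

theorem stmt_13 (n : ℕ) (hn : 0 < n) (A : Finset ℝ) (hA : A.Nonempty)
    (g : ℝ → ℝ)
    -- `g t` is a closest alternative to `t`
    (hg : ∀ t : ℝ, g t ∈ A ∧ ∀ b ∈ A, |g t - t| ≤ |b - t|)
    (f : (Fin n → ℝ) → ℝ)
    -- `f x = g (med x)`, where `med x` is the `⌈n/2⌉`-th smallest coordinate of `x`
    (hf : ∀ x : Fin n → ℝ, f x = g (x (Tuple.sort x ⟨(n - 1) / 2, by omega⟩))) :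
    -- (i) group strategyproofness
    (∀ (x : Fin n → ℝ) (S : Finset (Fin n)), S.Nonempty → ∀ x' : Fin n → ℝ,
      ∃ i ∈ S, |f x - x i| ≤ |f (fun k => if k ∈ S then x' k else x k) - x i|) ∧
    -- (ii) 3-approximation for the sum cost
    (∀ x : Fin n → ℝ, ∀ b ∈ A, (∑ i, |f x - x i|) ≤ 3 * ∑ i, |b - x i|) := by
  constructor
  · -- (i) group strategyproofness
    intro x S hS x'
    set y : Fin n → ℝ := fun k => if k ∈ S then x' k else x k with hy
    by_contra hcon
    push_neg at hcon
    obtain ⟨i0, hi0⟩ := hS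
    set kidx : Fin n := ⟨(n - 1) / 2, by omega⟩ with hkidx
    set m := x (Tuple.sort x kidx) with hmdef
    set m' := y (Tuple.sort y kidx) with hm'def
    have hp : f x = g m := hf x
    have hq : f y = g m' := hf y
    have hpA := (hg m).1
    have hqA := (hg m').1
    have h1 : |g m - m| ≤ |g m' - m| := (hg m).2 _ hqA
    have h2 : |g m' - m'| ≤ |g m - m'| := (hg m').2 _ hpA
    have hne : g m' ≠ g m := by
      intro h
      have := hcon i0 hi0
      rw [hp, hq, h] at this
      exact lt_irrefl _ this
    rcases lt_or_gt_of_ne hne with hlt | hgt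
    · -- g m' < g m : coalition members are to the left, median moves right
      have hxS : ∀ i ∈ S, 2 * x i < g m + g m' := by
        intro i hi
        have hci := hcon i hi
        rw [hp, hq] at hci
        rcases abs_cases (g m' - x i) with ⟨e1, e2⟩ | ⟨e1, e2⟩ <;>
          rcases abs_cases (g m - x i) with ⟨e3, e4⟩ | ⟨e3, e4⟩ <;> linarith
      have hmge : g m + g m' ≤ 2 * m := by
        rcases abs_cases (g m - m) with ⟨e1, e2⟩ | ⟨e1, e2⟩ <;>
          rcases abs_cases (g m' - m) with ⟨e3, e4⟩ | ⟨e3, e4⟩ <;> linarith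
      have hm'le : 2 * m' ≤ g m + g m' := by
        rcases abs_cases (g m' - m') with ⟨e1, e2⟩ | ⟨e1, e2⟩ <;>
          rcases abs_cases (g m - m') with ⟨e3, e4⟩ | ⟨e3, e4⟩ <;> linarith
      have hmm' : m ≤ m' := by
        apply sorted_ge_of_card y kidx m
        refine le_trans (card_ge_sorted x kidx) (Finset.card_le_card ?_)
        intro i hi
        simp only [mem_filter, mem_univ, true_and] at hi ⊢
        by_cases hiS : i ∈ S
        · exfalso
          have := hxS i hiS
          linarith
        · simpa [hy, hiS] using hi
      have hmm : m = m' := le_antisymm hmm' (by linarith)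
      rw [hmm] at hlt
      exact lt_irrefl _ hlt
    · -- g m' > g m : coalition members are to the right, median moves left
      have hxS : ∀ i ∈ S, g m + g m' < 2 * x i := by
        intro i hi
        have hci := hcon i hi
        rw [hp, hq] at hci
        rcases abs_cases (g m' - x i) with ⟨e1, e2⟩ | ⟨e1, e2⟩ <;>
          rcases abs_cases (g m - x i) with ⟨e3, e4⟩ | ⟨e3, e4⟩ <;> linarith
      have hmle : 2 * m ≤ g m + g m' := by
        rcases abs_cases (g m - m) with ⟨e1, e2⟩ | ⟨e1, e2⟩ <;>
          rcases abs_cases (g m' - m) with ⟨e3, e4⟩ | ⟨e3, e4⟩ <;> linarith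
      have hm'ge : g m + g m' ≤ 2 * m' := by
        rcases abs_cases (g m' - m') with ⟨e1, e2⟩ | ⟨e1, e2⟩ <;>
          rcases abs_cases (g m - m') with ⟨e3, e4⟩ | ⟨e3, e4⟩ <;> linarith
      have hmm' : m' ≤ m := by
        apply sorted_le_of_card y kidx m
        refine le_trans (card_le_sorted x kidx) (Finset.card_le_card ?_)
        intro i hi
        simp only [mem_filter, mem_univ, true_and] at hi ⊢
        by_cases hiS : i ∈ S
        · exfalso
          have := hxS i hiS
          linarith
        · simpa [hy, hiS] using hi
      have hmm : m = m' := le_antisymm (by linarith) hmm'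
      rw [hmm] at hgt
      exact lt_irrefl _ hgt
  · -- (ii) 3-approximation
    intro x b hb
    set kidx : Fin n := ⟨(n - 1) / 2, by omega⟩ with hkidx
    set m := x (Tuple.sort x kidx) with hmdef
    have hp : f x = g m := hf x
    have hmed : (∑ i, |m - x i|) ≤ ∑ i, |b - x i| := med_min hn x b
    have t1 : ∑ i, |f x - x i| ≤ ∑ i, (|b - x i| + 2 * |m - x i|) := by
      apply Finset.sum_le_sum
      intro i _
      rw [hp]
      have h1 : |g m - x i| ≤ |g m - m| + |m - x i| := abs_sub_le _ _ _
      have h2 : |g m - m| ≤ |b - m| := (hg m).2 b hb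
      have h3 : |b - m| ≤ |b - x i| + |x i - m| := abs_sub_le _ _ _
      have h4 : |x i - m| = |m - x i| := abs_sub_comm _ _
      linarith
    rw [Finset.sum_add_distrib, ← Finset.mul_sum] at t1
    linarith
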